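/- Covariance bound: for any probability measure μ and any square-integrable functions f, h, the covariance satisfies |μ(f²·h) − μ(f²)·μ(h)| ≤ c₀·(μ(f²))^{1/2}·(μ(|f − μf|²·(|h|² + μ(|h|²))))^{1/2} for some universal constant c₀ (one may take c₀ = 3), assuming all integrals involved are finite. -/

import Mathlib

open MeasureTheory Real

/-- Covariance bound (Lemma 4.1 of the paper), with universal constant `c₀ = 3`. -/
theorem covariance_bound {α : Type*} [MeasurableSpace α]
    (μ : Measure α) [IsProbabilityMeasure μ] (f h : α → ℝ)
    (hf : MemLp f 2 μ) (hh : MemLp h 2 μ)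
    (hf2h : Integrable (fun x => (f x)^2 * h x) μ)
    (hint : Integrable
      (fun x => (f x - ∫ y, f y ∂μ)^2 * ((h x)^2 + ∫ y, (h y)^2 ∂μ)) μ) :
    |(∫ x, (f x)^2 * h x ∂μ) - (∫ x, (f x)^2 ∂μ) * (∫ x, h x ∂μ)|
      ≤ 3 * Real.sqrt (∫ x, (f x)^2 ∂μ) *
        Real.sqrt (∫ x, (f x - ∫ y, f y ∂μ)^2 * ((h x)^2 + ∫ y, (h y)^2 ∂μ) ∂μ) := by
  set m := ∫ y, f y ∂μ with hm
  set Ih := ∫ y, h y ∂μ with hIhdef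
  set H2 := ∫ y, (h y)^2 ∂μ with hH2def
  have hfint : Integrable f μ := hf.integrable one_le_two
  have hhint : Integrable h μ := hh.integrable one_le_two
  have hfsq : Integrable (fun x => (f x)^2) μ := hf.integrable_sq
  have hhsq : Integrable (fun x => (h x)^2) μ := hh.integrable_sq
  have hH2nn : 0 ≤ H2 := integral_nonneg fun x => sq_nonneg _
  have hI2nn : 0 ≤ ∫ x, (f x)^2 ∂μ := integral_nonneg fun x => sq_nonneg _
  -- (∫ f)² ≤ ∫ f², (∫ h)² ≤ ∫ h²
  have hm2 : m^2 ≤ ∫ x, (f x)^2 ∂μ := by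
    have hv := ProbabilityTheory.variance_nonneg f μ
    rw [ProbabilityTheory.variance_eq_sub hf] at hv
    simp only [Pi.pow_apply] at hv
    linarith
  have hIh2 : Ih^2 ≤ H2 := by
    have hv := ProbabilityTheory.variance_nonneg h μ
    rw [ProbabilityTheory.variance_eq_sub hh] at hv
    simp only [Pi.pow_apply] at hv
    linarith
  -- integrability facts
  have hfh : Integrable (fun x => f x * h x) μ := by
    refine Integrable.mono' (hfsq.add hhsq) (hf.1.mul hh.1) ?_
    filter_upwards with x
    simp only [Pi.add_apply, Real.norm_eq_abs, abs_mul]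
    nlinarith [sq_nonneg (|f x| - |h x|), sq_abs (f x), sq_abs (h x),
      abs_nonneg (f x), abs_nonneg (h x)]
  have hg2 : Integrable (fun x => (f x - m)^2) μ := (hf.sub (memLp_const m)).integrable_sq
  have hg2h2 : Integrable (fun x => (f x - m)^2 * (h x)^2) μ := by
    have hsm : AEStronglyMeasurable (fun x => (f x - m)^2 * (h x)^2) μ := by
      have h1 : AEStronglyMeasurable (fun x => f x - m) μ :=
        hf.1.sub aestronglyMeasurable_const
      exact ((h1.mul h1).mul (hh.1.mul hh.1)).congr
        (by filter_upwards with x; simp [Pi.mul_apply, Pi.pow_apply]; ring)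
    refine Integrable.mono' hint hsm ?_
    filter_upwards with x
    rw [Real.norm_eq_abs, abs_of_nonneg (by positivity)]
    nlinarith [sq_nonneg (f x - m), sq_nonneg (h x)]
  have hg2h : Integrable (fun x => (f x - m)^2 * h x) μ := by
    have e : (fun x => (f x - m)^2 * h x)
        = fun x => ((f x)^2 * h x - (2*m) * (f x * h x)) + m^2 * h x := by
      funext x; ring
    rw [e]
    exact (hf2h.sub (hfh.const_mul _)).add (hhint.const_mul _)
  have hv2 : Integrable (fun x => ((f x - m) * (h x - Ih))^2) μ := by
    have e : (fun x => ((f x - m) * (h x - Ih))^2)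
        = fun x => ((f x - m)^2 * (h x)^2 - (2*Ih) * ((f x - m)^2 * h x))
            + Ih^2 * (f x - m)^2 := by
      funext x; ring
    rw [e]
    exact (hg2h2.sub (hg2h.const_mul _)).add (hg2.const_mul _)
  have hvmem : MemLp (fun x => (f x - m) * (h x - Ih)) 2 μ :=
    (memLp_two_iff_integrable_sq
      ((hf.1.sub aestronglyMeasurable_const).mul (hh.1.sub aestronglyMeasurable_const))).2 hv2
  have humem : MemLp (fun x => f x + m) 2 μ := hf.add (memLp_const m)
  have hu2 : Integrable (fun x => (f x + m)^2) μ := humem.integrable_sq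
  -- the algebraic identity for the covariance
  have key : ∫ x, (f x + m) * ((f x - m) * (h x - Ih)) ∂μ
      = (∫ x, (f x)^2 * h x ∂μ) - (∫ x, (f x)^2 ∂μ) * Ih := by
    have e : (fun x => (f x + m) * ((f x - m) * (h x - Ih)))
        = fun x => ((f x)^2 * h x - Ih * (f x)^2) - (m^2 * h x - m^2 * Ih) := by
      funext x; ring
    have i1 : Integrable (fun x => (f x)^2 * h x - Ih * (f x)^2) μ :=
      hf2h.sub (hfsq.const_mul Ih)
    have i2 : Integrable (fun x => m^2 * h x - m^2 * Ih) μ :=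
      (hhint.const_mul (m^2)).sub (integrable_const _)
    rw [e, integral_sub i1 i2,
      integral_sub hf2h (hfsq.const_mul Ih),
      integral_sub (hhint.const_mul _) (integrable_const _),
      integral_const_mul, integral_const_mul, integral_const]
    simp only [measure_univ, probReal_univ, ENNReal.toReal_one, one_smul, smul_eq_mul, one_mul, ← hIhdef]
    ring
  -- Cauchy–Schwarz
  have hpq : Real.HolderConjugate 2 2 := Real.HolderConjugate.two_two
  have h2 : (ENNReal.ofReal (2:ℝ)) = 2 := by
    rw [ENNReal.ofReal_ofNat]
  have cs := integral_mul_norm_le_Lp_mul_Lq (μ := μ) hpq (h2 ▸ humem) (h2 ▸ hvmem)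
  have habs : |∫ x, (f x + m) * ((f x - m) * (h x - Ih)) ∂μ|
      ≤ ∫ x, ‖f x + m‖ * ‖(f x - m) * (h x - Ih)‖ ∂μ := by
    calc |∫ x, (f x + m) * ((f x - m) * (h x - Ih)) ∂μ|
        ≤ ∫ x, |(f x + m) * ((f x - m) * (h x - Ih))| ∂μ := by
          rw [show |∫ x, (f x + m) * ((f x - m) * (h x - Ih)) ∂μ|
              = ‖∫ x, (f x + m) * ((f x - m) * (h x - Ih)) ∂μ‖ from (Real.norm_eq_abs _).symm]
          exact le_trans (norm_integral_le_integral_norm _)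
            (le_of_eq (by simp only [Real.norm_eq_abs]))
      _ = ∫ x, ‖f x + m‖ * ‖(f x - m) * (h x - Ih)‖ ∂μ := by
          congr 1; funext x; rw [Real.norm_eq_abs, Real.norm_eq_abs, abs_mul]
  have csq : ∫ x, ‖f x + m‖ * ‖(f x - m) * (h x - Ih)‖ ∂μ
      ≤ Real.sqrt (∫ x, (f x + m)^2 ∂μ)
        * Real.sqrt (∫ x, ((f x - m) * (h x - Ih))^2 ∂μ) := by
    refine le_trans cs (le_of_eq ?_)
    rw [Real.sqrt_eq_rpow, Real.sqrt_eq_rpow]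
    congr 2
    · congr 1; funext x
      rw [show ((2:ℝ) = ((2:ℕ):ℝ)) by norm_num, Real.rpow_natCast, Real.norm_eq_abs, sq_abs]
    · congr 1; funext x
      rw [show ((2:ℝ) = ((2:ℕ):ℝ)) by norm_num, Real.rpow_natCast, Real.norm_eq_abs, sq_abs]
  -- bound the first factor
  have hu2val : ∫ x, (f x + m)^2 ∂μ ≤ 4 * ∫ x, (f x)^2 ∂μ := by
    have e : (fun x => (f x + m)^2) = fun x => ((f x)^2 + (2*m) * f x) + m^2 := by
      funext x; ring
    have i1 : Integrable (fun x => (f x)^2 + (2*m) * f x) μ := hfsq.add (hfint.const_mul _)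
    rw [e, integral_add i1 (integrable_const _),
      integral_add hfsq (hfint.const_mul _), integral_const_mul, integral_const]
    simp only [measure_univ, probReal_univ, ENNReal.toReal_one, one_smul, ← hm]
    nlinarith
  -- bound the second factor
  have hv2val : ∫ x, ((f x - m) * (h x - Ih))^2 ∂μ
      ≤ 2 * ∫ x, (f x - m)^2 * ((h x)^2 + H2) ∂μ := by
    rw [← integral_const_mul]
    refine integral_mono hv2 (hint.const_mul 2) fun x => ?_
    have hb : (h x - Ih)^2 ≤ 2 * ((h x)^2 + H2) := by
      nlinarith [sq_nonneg (h x + Ih)]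
    calc ((f x - m) * (h x - Ih))^2 = (f x - m)^2 * (h x - Ih)^2 := by ring
      _ ≤ (f x - m)^2 * (2 * ((h x)^2 + H2)) :=
          mul_le_mul_of_nonneg_left hb (sq_nonneg _)
      _ = 2 * ((f x - m)^2 * ((h x)^2 + H2)) := by ring
  have hAnn : 0 ≤ ∫ x, (f x - m)^2 * ((h x)^2 + H2) ∂μ :=
    integral_nonneg fun x => mul_nonneg (sq_nonneg _) (by positivity)
  -- put everything together
  calc |(∫ x, (f x)^2 * h x ∂μ) - (∫ x, (f x)^2 ∂μ) * Ih|
      = |∫ x, (f x + m) * ((f x - m) * (h x - Ih)) ∂μ| := by rw [key]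
    _ ≤ ∫ x, ‖f x + m‖ * ‖(f x - m) * (h x - Ih)‖ ∂μ := habs
    _ ≤ Real.sqrt (∫ x, (f x + m)^2 ∂μ)
        * Real.sqrt (∫ x, ((f x - m) * (h x - Ih))^2 ∂μ) := csq
    _ ≤ Real.sqrt (4 * ∫ x, (f x)^2 ∂μ)
        * Real.sqrt (2 * ∫ x, (f x - m)^2 * ((h x)^2 + H2) ∂μ) :=
        mul_le_mul (Real.sqrt_le_sqrt hu2val) (Real.sqrt_le_sqrt hv2val)
          (Real.sqrt_nonneg _) (Real.sqrt_nonneg _)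
    _ = (2 * Real.sqrt (∫ x, (f x)^2 ∂μ))
        * (Real.sqrt 2 * Real.sqrt (∫ x, (f x - m)^2 * ((h x)^2 + H2) ∂μ)) := by
        rw [show (4:ℝ) = 2^2 by norm_num, Real.sqrt_mul (by positivity),
          Real.sqrt_sq (by norm_num), Real.sqrt_mul (by norm_num)]
    _ ≤ 3 * Real.sqrt (∫ x, (f x)^2 ∂μ)
        * Real.sqrt (∫ x, (f x - m)^2 * ((h x)^2 + H2) ∂μ) := by
        have hs2 : Real.sqrt 2 ≤ 3/2 := by
          rw [show (3/2 : ℝ) = Real.sqrt ((3/2)^2) by rw [Real.sqrt_sq]; norm_num]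
          exact Real.sqrt_le_sqrt (by norm_num)
        nlinarith [Real.sqrt_nonneg (∫ x, (f x)^2 ∂μ),
          Real.sqrt_nonneg (∫ x, (f x - m)^2 * ((h x)^2 + H2) ∂μ),
          mul_nonneg (Real.sqrt_nonneg (∫ x, (f x)^2 ∂μ))
            (Real.sqrt_nonneg (∫ x, (f x - m)^2 * ((h x)^2 + H2) ∂μ))]
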